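/- Let k be a commutative ring and A a commutative unital k-algebra. For n ≥ 1 and a_0, a_1, …, a_n ∈ A, let ε_n(a_0, a_1,…,a_n) = Σ_{σ∈S_n} sgn(σ) (a_0, a_{σ^{−1}(1)},…, a_{σ^{−1}(n)}) ∈ A^{⊗(n+1)}. Then the Hochschild boundary of this element vanishes: b(ε_n(a_0,a_1,…,a_n)) = 0. -/

import Mathlib

open TensorProduct DirectSum

universe u

section HochschildCore

variable (k : Type u) [CommRing k] (A : Type u) [Ring A] [Algebra k A]
variable (M : Type u) [AddCommGroup M] [Module k M]
  [Module A M] [Module Aᵐᵒᵖ M] [SMulCommClass A Aᵐᵒᵖ M]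
  [IsScalarTower k A M] [IsScalarTower k Aᵐᵒᵖ M]

/-- The Hochschild chain module `C_r(A,M) = M ⊗ A^{⊗ r}` (iterated tensor product over `k`),
bundled as an object of `ModuleCat k`. -/
noncomputable def HochOb : ℕ → ModuleCat.{u} k
  | 0 => ModuleCat.of k M
  | (r+1) => ModuleCat.of k ((HochOb r : Type u) ⊗[k] A)

/-- The Hochschild chain module `C_r(A,M) = M ⊗ A^{⊗ r}`. -/
noncomputable abbrev HC (r : ℕ) : Type u := HochOb k A M r

/-- The left action of `A` on `M`, as a bilinear map over `k`. -/
noncomputable def actL0 : A →ₗ[k] M →ₗ[k] M where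
  toFun a :=
    { toFun := fun x => a • x
      map_add' := fun x y => smul_add a x y
      map_smul' := fun c x => (smul_comm c a x).symm }
  map_add' a b := LinearMap.ext fun x => add_smul a b x
  map_smul' c a := LinearMap.ext fun x => smul_assoc c a x

/-- The right action of `A` on `M`, as a bilinear map over `k`. -/
noncomputable def actR : M →ₗ[k] A →ₗ[k] M where
  toFun x :=
    { toFun := fun a => MulOpposite.op a • x
      map_add' := fun a b => by rw [MulOpposite.op_add, add_smul]
      map_smul' := fun c a => by
        dsimp only [RingHom.id_apply]; rw [MulOpposite.op_smul, smul_assoc] }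
  map_add' x y := LinearMap.ext fun a => smul_add _ x y
  map_smul' c x := LinearMap.ext fun a => (smul_comm c _ x).symm

/-- The left action of `A` on the `M`-factor of `C_r(A,M)`, as a bilinear map. -/
noncomputable def actL : (r : ℕ) → (A →ₗ[k] HC k A M r →ₗ[k] HC k A M r)
  | 0 => actL0 k A M
  | (r+1) => (LinearMap.rTensorHom A).comp (actL r)

/-- The Hochschild face maps `d_i : C_{r+1}(A,M) → C_r(A,M)`, `i = 0, …, r+1`:
`d_0 (m, a_1, …, a_{r+1}) = (m a_1, a_2, …, a_{r+1})`,
`d_i (m, a_1, …, a_{r+1}) = (m, a_1, …, a_i a_{i+1}, …, a_{r+1})` for `1 ≤ i ≤ r`, and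
`d_{r+1} (m, a_1, …, a_{r+1}) = (a_{r+1} m, a_1, …, a_r)`. -/
noncomputable def hface : (r : ℕ) → Fin (r+2) → (HC k A M (r+1) →ₗ[k] HC k A M r)
  | 0, i =>
      if i.val = 0 then TensorProduct.lift (actR k A M)
      else TensorProduct.lift ((actL k A M 0).flip)
  | (r+1), i =>
      if h : i.val ≤ r then
        LinearMap.rTensor A (hface r ⟨i.val, by omega⟩)
      else if i.val = r + 1 then
        (LinearMap.lTensor (HC k A M r) (LinearMap.mul' k A)).comp
          (TensorProduct.assoc k (HC k A M r) A A).toLinearMap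
      else
        TensorProduct.lift ((actL k A M (r+1)).flip)

/-- The Hochschild boundary `b = Σ_{i=0}^{r+1} (-1)^i d_i : C_{r+1}(A,M) → C_r(A,M)`. -/
noncomputable def hboundary (r : ℕ) : HC k A M (r+1) →ₗ[k] HC k A M r :=
  ∑ i : Fin (r+2), ((-1 : ℤ) ^ (i : ℕ)) • hface k A M r i

/-- The submodule of Hochschild cycles in degree `r`. -/
noncomputable def hcycles : (r : ℕ) → Submodule k (HC k A M r)
  | 0 => ⊤
  | (r+1) => LinearMap.ker (hboundary k A M r)

/-- The Hochschild homology `H_r(A,M)` of `A` with coefficients in the bimodule `M`: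
the `r`-th homology of the Hochschild chain complex `C_*(A,M)`. -/
noncomputable def HochH (r : ℕ) : Type u :=
  (hcycles k A M r) ⧸ (Submodule.comap (hcycles k A M r).subtype
    (LinearMap.range (hboundary k A M r)))

noncomputable instance (r : ℕ) : AddCommGroup (HochH k A M r) :=
  inferInstanceAs (AddCommGroup ((hcycles k A M r) ⧸ (Submodule.comap (hcycles k A M r).subtype
    (LinearMap.range (hboundary k A M r)))))

noncomputable instance (r : ℕ) : Module k (HochH k A M r) :=
  inferInstanceAs (Module k ((hcycles k A M r) ⧸ (Submodule.comap (hcycles k A M r).subtype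
    (LinearMap.range (hboundary k A M r)))))

end HochschildCore

section Elem

variable (k : Type u) [CommRing k] (A : Type u) [Ring A] [Algebra k A]
variable (M : Type u) [AddCommGroup M] [Module k M]
  [Module A M] [Module Aᵐᵒᵖ M] [SMulCommClass A Aᵐᵒᵖ M]
  [IsScalarTower k A M] [IsScalarTower k Aᵐᵒᵖ M]

/-- The elementary tensor `(x, a_1, …, a_r) = x ⊗ a_1 ⊗ ⋯ ⊗ a_r` in the Hochschild chain
module `C_r(A,M) = M ⊗ A^{⊗ r}`, where `a_i = v (i-1)`. -/
noncomputable def helem : (r : ℕ) → M → (Fin r → A) → HC k A M r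
  | 0, x, _ => x
  | (r+1), x, v => (helem r x (fun i => v i.castSucc)) ⊗ₜ[k] (v (Fin.last r))

end Elem


section Aux

variable (k : Type u) [CommRing k] (A : Type u) [Ring A] [Algebra k A]
variable (M : Type u) [AddCommGroup M] [Module k M]
  [Module A M] [Module Aᵐᵒᵖ M] [SMulCommClass A Aᵐᵒᵖ M]
  [IsScalarTower k A M] [IsScalarTower k Aᵐᵒᵖ M]

lemma helem_succ (r : ℕ) (x : M) (v : Fin (r+1) → A) :
    helem k A M (r+1) x v
      = (helem k A M r x (fun i => v i.castSucc)) ⊗ₜ[k] (v (Fin.last r)) := rfl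

lemma actL_helem (r : ℕ) (b : A) (x : M) (v : Fin r → A) :
    actL k A M r b (helem k A M r x v) = helem k A M r (b • x) v := by
  induction r with
  | zero => rfl
  | succ r ih =>
      show LinearMap.rTensor A ((actL k A M r) b) _ = _
      rw [helem_succ, helem_succ]
      erw [LinearMap.rTensor_tmul]
      rw [ih]

/-- Merge positions `p` and `p+1` of a tuple by multiplication. -/
def mergeAt (r : ℕ) (p : ℕ) (v : Fin (r+1) → A) : Fin r → A := fun i =>
  if (i : ℕ) < p then v i.castSucc
  else if (i : ℕ) = p then v i.castSucc * v i.succ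
  else v i.succ

/-- Explicit value of the `j`-th face map on an elementary tensor. -/
noncomputable def facemap (r : ℕ) (j : Fin (r+2)) (x : M) (v : Fin (r+1) → A) :
    HC k A M r :=
  if j.val = 0 then helem k A M r ((MulOpposite.op (v 0)) • x) (fun i => v i.succ)
  else if j.val = r+1 then
    helem k A M r ((v (Fin.last r)) • x) (fun i => v i.castSucc)
  else helem k A M r x (mergeAt A r (j.val - 1) v)

lemma helem_congr (r : ℕ) {x y : M} {v w : Fin r → A} (hx : x = y)
    (hv : ∀ i, v i = w i) : helem k A M r x v = helem k A M r y w := by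
  rw [hx, funext hv]

lemma face_last_apply (r : ℕ) (t : HC k A M r) (b c : A) :
    ((LinearMap.lTensor (HC k A M r) (LinearMap.mul' k A)).comp
      (TensorProduct.assoc k (HC k A M r) A A).toLinearMap)
        ((t ⊗ₜ[k] b) ⊗ₜ[k] c) = t ⊗ₜ[k] (b * c) := by
  rw [LinearMap.comp_apply, LinearEquiv.coe_coe, TensorProduct.assoc_tmul,
    LinearMap.lTensor_tmul, LinearMap.mul'_apply]

lemma lift_flip_apply (r : ℕ) (t : HC k A M r) (b : A) :
    TensorProduct.lift ((actL k A M r).flip) (t ⊗ₜ[k] b) = actL k A M r b t := by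
  rw [TensorProduct.lift.tmul, LinearMap.flip_apply]

lemma hface_helem (r : ℕ) (j : Fin (r+2)) (x : M) (v : Fin (r+1) → A) :
    hface k A M r j (helem k A M (r+1) x v) = facemap k A M r j x v := by
  induction r with
  | zero =>
      rcases j with ⟨jv, hj⟩
      interval_cases jv
      · show TensorProduct.lift (actR k A M) (x ⊗ₜ[k] v 0) = _
        simp [facemap, actR]
        rfl
      · show TensorProduct.lift ((actL k A M 0).flip) (x ⊗ₜ[k] v 0) = _
        simp [facemap, actL, actL0]
        rfl
  | succ r ih =>
      rcases j with ⟨jv, hj⟩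
      rw [helem_succ]
      by_cases h1 : jv ≤ r
      · rw [show hface k A M (r+1) ⟨jv, hj⟩
            = LinearMap.rTensor A (hface k A M r ⟨jv, by omega⟩) from by
              rw [hface]; exact dif_pos h1]
        erw [LinearMap.rTensor_tmul]
        rw [ih]
        by_cases h0 : jv = 0
        · subst h0
          simp only [facemap, if_pos rfl]
          rw [helem_succ]
          refine congrArg₂ (fun p (q : A) => p ⊗ₜ[k] q) ?_ ?_
          · refine helem_congr k A M r ?_ ?_
            · exact congrArg (fun z : A => MulOpposite.op z • x)
                (congrArg v (by simp))
            · intro i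
              exact congrArg v (by simp [Fin.ext_iff])
          · exact congrArg v (by simp)
        · have hne1 : ¬ (jv = r + 1 + 1) := by omega
          simp only [facemap, if_neg h0, if_neg (show ¬ jv = r+1 from by omega),
            if_neg hne1]
          rw [helem_succ]
          refine congrArg₂ (fun p (q : A) => p ⊗ₜ[k] q) ?_ ?_
          · refine helem_congr k A M r rfl ?_
            intro i
            simp only [mergeAt, Fin.coe_castSucc]
            by_cases hlt : (i : ℕ) < jv - 1
            · rw [if_pos hlt, if_pos hlt]
            · by_cases heq : (i : ℕ) = jv - 1
              · rw [if_neg hlt, if_pos heq, if_neg hlt, if_pos heq]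
                exact congrArg₂ (· * ·) rfl
                  (congrArg v (by simp [Fin.ext_iff]))
              · rw [if_neg hlt, if_neg heq, if_neg hlt, if_neg heq]
                exact congrArg v (by simp [Fin.ext_iff])
          · simp only [mergeAt, Fin.val_last]
            rw [if_neg (by omega), if_neg (by omega)]
            exact congrArg v (by simp)
      · by_cases h2 : jv = r + 1
        · rw [show hface k A M (r+1) ⟨jv, hj⟩
              = (LinearMap.lTensor (HC k A M r) (LinearMap.mul' k A)).comp
                  (TensorProduct.assoc k (HC k A M r) A A).toLinearMap from by
                rw [hface]; exact (dif_neg h1).trans (if_pos h2)]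
          erw [face_last_apply]
          simp only [facemap, if_neg (show ¬ jv = 0 by omega),
            if_neg (show ¬ jv = r + 1 + 1 by omega)]
          rw [helem_succ]
          refine congrArg₂ (fun p (q : A) => p ⊗ₜ[k] q) ?_ ?_
          · refine helem_congr k A M r rfl ?_
            intro i
            simp only [mergeAt, Fin.coe_castSucc]
            rw [if_pos (by omega)]
          · simp only [mergeAt, Fin.val_last]
            rw [if_neg (by omega), if_pos (by omega)]
            exact congrArg₂ (· * ·) rfl (congrArg v (by simp))
        · have h3 : jv = r + 2 := by omega
          rw [show hface k A M (r+1) ⟨jv, hj⟩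
              = TensorProduct.lift ((actL k A M (r+1)).flip) from by
                rw [hface]; exact (dif_neg h1).trans (if_neg h2)]
          erw [lift_flip_apply]
          rw [actL_helem]
          simp only [facemap, if_neg (show ¬ jv = 0 by omega),
            if_pos (show jv = r + 1 + 1 by omega)]

lemma hboundary_helem (r : ℕ) (x : M) (v : Fin (r+1) → A) :
    hboundary k A M r (helem k A M (r+1) x v)
      = ∑ j : Fin (r+2), ((-1 : ℤ) ^ (j : ℕ)) • facemap k A M r j x v := by
  rw [hboundary]
  rw [LinearMap.sum_apply]
  refine Finset.sum_congr rfl fun j _ => ?_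
  rw [LinearMap.smul_apply, hface_helem]

end Aux


section MainAux

variable (k : Type u) [CommRing k] (A : Type u) [CommRing A] [Algebra k A]

/-- The summand `sgn(σ) (−1)^j d_j(σ · (a₀,a₁,…,a_n))` indexed by a pair `(σ, j)`. -/
noncomputable def hterm (r : ℕ) (a₀ : A) (a : Fin (r+1) → A)
    (x : Equiv.Perm (Fin (r+1)) × Fin (r+2)) : HC k A A r :=
  ((Equiv.Perm.sign x.1 : ℤ) * (-1 : ℤ) ^ ((x.2 : ℕ))) •
    facemap k A A r x.2 a₀ (fun i => a (x.1⁻¹ i))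

/-- The sign-reversing involution pairing up the summands of `b(ε_n)`. -/
noncomputable def invo (r : ℕ) :
    Equiv.Perm (Fin (r+1)) × Fin (r+2) → Equiv.Perm (Fin (r+1)) × Fin (r+2) :=
  fun x =>
  if _h0 : (x.2 : ℕ) = 0 then ((finRotate (r+1))⁻¹ * x.1, Fin.last (r+1))
  else if _hn : (x.2 : ℕ) = r+1 then (finRotate (r+1) * x.1, 0)
  else (Equiv.swap ⟨(x.2 : ℕ) - 1, by have := x.2.isLt; omega⟩
        ⟨(x.2 : ℕ), by have := x.2.isLt; omega⟩ * x.1, x.2)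

lemma invo_invo (r : ℕ) (x : Equiv.Perm (Fin (r+1)) × Fin (r+2)) :
    invo r (invo r x) = x := by
  obtain ⟨σ, j⟩ := x
  by_cases h0 : (j : ℕ) = 0
  · simp only [invo, dif_pos h0]
    rw [dif_neg (by simp), dif_pos (by simp)]
    exact Prod.ext (mul_inv_cancel_left _ _) (Fin.ext (by simp [h0]))
  · by_cases hn : (j : ℕ) = r + 1
    · simp only [invo, dif_neg h0, dif_pos hn]
      rw [dif_pos (by simp)]
      exact Prod.ext (inv_mul_cancel_left _ _) (Fin.ext (by simp [hn]))
    · simp only [invo, dif_neg h0, dif_neg hn]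
      exact Prod.ext (Equiv.swap_mul_self_mul _ _ _) rfl

lemma invo_ne (r : ℕ) (x : Equiv.Perm (Fin (r+1)) × Fin (r+2)) :
    invo r x ≠ x := by
  obtain ⟨σ, j⟩ := x
  by_cases h0 : (j : ℕ) = 0
  · simp only [invo, dif_pos h0]
    intro h
    have h2 := congrArg (fun y => ((Prod.snd y : Fin (r+2)) : ℕ)) h
    simp [h0] at h2
  · by_cases hn : (j : ℕ) = r + 1
    · simp only [invo, dif_neg h0, dif_pos hn]
      intro h
      have h2 := congrArg (fun y => ((Prod.snd y : Fin (r+2)) : ℕ)) h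
      simp at h2
      omega
    · simp only [invo, dif_neg h0, dif_neg hn]
      intro h
      have h1 := congrArg Prod.fst h
      simp only at h1
      rw [Equiv.swap_mul_eq_iff] at h1
      have := congrArg Fin.val h1
      simp at this
      omega

lemma pair0 (r : ℕ) (a₀ : A) (a : Fin (r+1) → A) (σ : Equiv.Perm (Fin (r+1))) :
    hterm k A r a₀ a (σ, 0)
      + hterm k A r a₀ a ((finRotate (r+1))⁻¹ * σ, Fin.last (r+1)) = 0 := by
  have hface0 : facemap k A A r (Fin.last (r+1)) a₀
        (fun i => a (((finRotate (r+1))⁻¹ * σ)⁻¹ i))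
      = facemap k A A r 0 a₀ (fun i => a (σ⁻¹ i)) := by
    have hw : ∀ m : Fin (r+1),
        a (((finRotate (r+1))⁻¹ * σ)⁻¹ m) = a (σ⁻¹ (finRotate (r+1) m)) := by
      intro m
      rw [mul_inv_rev, inv_inv, Equiv.Perm.mul_apply]
    simp only [facemap, Fin.val_last, Fin.val_zero, if_pos rfl,
      if_neg (Nat.succ_ne_zero r), if_pos rfl]
    refine helem_congr k A A r ?_ ?_
    · rw [hw, finRotate_last]
      rw [smul_eq_mul, op_smul_eq_mul]
      exact mul_comm _ _
    · intro i
      rw [hw, finRotate_succ_apply, Fin.coeSucc_eq_succ]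
  have hsign : ((Equiv.Perm.sign ((finRotate (r+1))⁻¹ * σ)) : ℤ)
      = (-1 : ℤ) ^ r * ((Equiv.Perm.sign σ) : ℤ) := by
    rw [map_mul, map_inv, sign_finRotate, ← inv_pow,
      show ((-1 : ℤˣ))⁻¹ = -1 from by decide]
    push_cast
    ring
  rw [hterm, hterm]
  simp only
  rw [hface0, hsign, ← add_smul]
  have hodd : (-1 : ℤ) ^ r * (-1 : ℤ) ^ ((Fin.last (r+1) : Fin (r+2)) : ℕ) = -1 := by
    rw [Fin.val_last, ← pow_add]
    exact Odd.neg_one_pow ⟨r, by ring⟩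
  have hc : ((Equiv.Perm.sign σ : ℤ)) * (-1 : ℤ) ^ (((0 : Fin (r+2))) : ℕ)
      + (-1 : ℤ) ^ r * ((Equiv.Perm.sign σ : ℤ))
          * (-1 : ℤ) ^ ((Fin.last (r+1) : Fin (r+2)) : ℕ) = 0 := by
    have h1 : (-1 : ℤ) ^ r * ((Equiv.Perm.sign σ : ℤ))
        * (-1 : ℤ) ^ ((Fin.last (r+1) : Fin (r+2)) : ℕ)
        = ((Equiv.Perm.sign σ : ℤ)) * ((-1 : ℤ) ^ r
            * (-1 : ℤ) ^ ((Fin.last (r+1) : Fin (r+2)) : ℕ)) := by ring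
    rw [h1, hodd]
    simp
  rw [hc, zero_smul]

lemma pairlast (r : ℕ) (a₀ : A) (a : Fin (r+1) → A) (σ : Equiv.Perm (Fin (r+1)))
    (j : Fin (r+2)) (hn : (j : ℕ) = r + 1) :
    hterm k A r a₀ a (σ, j) + hterm k A r a₀ a (finRotate (r+1) * σ, 0) = 0 := by
  have h := pair0 k A r a₀ a (finRotate (r+1) * σ)
  rw [inv_mul_cancel_left] at h
  have hjl : j = Fin.last (r+1) := Fin.ext (by simp [hn])
  rw [hjl, add_comm]
  exact h

lemma pairInner (r : ℕ) (a₀ : A) (a : Fin (r+1) → A) (σ : Equiv.Perm (Fin (r+1)))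
    (j : Fin (r+2)) (h0 : (j : ℕ) ≠ 0) (hn : (j : ℕ) ≠ r + 1)
    (p q : Fin (r+1)) (hp : (p : ℕ) = (j : ℕ) - 1) (hq : (q : ℕ) = (j : ℕ)) :
    hterm k A r a₀ a (σ, j) + hterm k A r a₀ a (Equiv.swap p q * σ, j) = 0 := by
  have hjlt := j.isLt
  have hpq : p ≠ q := by
    intro h
    have := congrArg Fin.val h
    omega
  have hw : ∀ m : Fin (r+1),
      a ((Equiv.swap p q * σ)⁻¹ m) = a (σ⁻¹ (Equiv.swap p q m)) := by
    intro m
    rw [mul_inv_rev, Equiv.Perm.mul_apply, Equiv.swap_inv]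
  have hface_eq : facemap k A A r j a₀ (fun i => a ((Equiv.swap p q * σ)⁻¹ i))
      = facemap k A A r j a₀ (fun i => a (σ⁻¹ i)) := by
    simp only [facemap, if_neg h0, if_neg hn]
    refine helem_congr k A A r rfl ?_
    intro i
    simp only [mergeAt]
    by_cases hlt : (i : ℕ) < (j : ℕ) - 1
    · rw [if_pos hlt, if_pos hlt, hw]
      have hfix : Equiv.swap p q i.castSucc = i.castSucc :=
        Equiv.swap_apply_of_ne_of_ne
          (by intro h; have := congrArg Fin.val h; simp at this; omega)
          (by intro h; have := congrArg Fin.val h; simp at this; omega)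
      rw [hfix]
    · by_cases heq : (i : ℕ) = (j : ℕ) - 1
      · rw [if_neg hlt, if_pos heq, if_neg hlt, if_pos heq, hw, hw,
          show i.castSucc = p from Fin.ext (by simp; omega),
          show i.succ = q from Fin.ext (by simp [Fin.val_succ]; omega),
          Equiv.swap_apply_left, Equiv.swap_apply_right, mul_comm]
      · rw [if_neg hlt, if_neg heq, if_neg hlt, if_neg heq, hw]
        have hfix : Equiv.swap p q i.succ = i.succ :=
          Equiv.swap_apply_of_ne_of_ne
            (by intro h; have := congrArg Fin.val h; simp [Fin.val_succ] at this; omega)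
            (by intro h; have := congrArg Fin.val h; simp [Fin.val_succ] at this; omega)
        rw [hfix]
  have hsign : ((Equiv.Perm.sign (Equiv.swap p q * σ)) : ℤ)
      = -((Equiv.Perm.sign σ) : ℤ) := by
    rw [map_mul, Equiv.Perm.sign_swap hpq]
    push_cast
    ring
  rw [hterm, hterm]
  simp only
  rw [hface_eq, hsign, ← add_smul]
  have hc : ((Equiv.Perm.sign σ : ℤ)) * (-1 : ℤ) ^ ((j : ℕ))
      + (-((Equiv.Perm.sign σ : ℤ))) * (-1 : ℤ) ^ ((j : ℕ)) = 0 := by ring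
  rw [hc, zero_smul]

lemma hterm_invo (r : ℕ) (a₀ : A) (a : Fin (r+1) → A)
    (x : Equiv.Perm (Fin (r+1)) × Fin (r+2)) :
    hterm k A r a₀ a x + hterm k A r a₀ a (invo r x) = 0 := by
  obtain ⟨σ, j⟩ := x
  by_cases h0 : (j : ℕ) = 0
  · simp only [invo, dif_pos h0]
    have hj0 : j = 0 := Fin.ext (by simp [h0])
    rw [hj0]
    exact pair0 k A r a₀ a σ
  · by_cases hn : (j : ℕ) = r + 1
    · simp only [invo, dif_neg h0, dif_pos hn]
      exact pairlast k A r a₀ a σ j hn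
    · simp only [invo, dif_neg h0, dif_neg hn]
      exact pairInner k A r a₀ a σ j h0 hn _ _ rfl rfl

end MainAux

/-- **Statement 7.** Let `k` be a commutative ring and `A` a commutative unital
`k`-algebra.  For `n = r + 1 ≥ 1` and `a₀, a₁, …, a_n ∈ A`, the antisymmetrization
`ε_n(a₀, a₁, …, a_n) = Σ_{σ ∈ S_n} sgn(σ) (a₀, a_{σ⁻¹(1)}, …, a_{σ⁻¹(n)}) ∈ A^{⊗(n+1)}`
is killed by the Hochschild boundary: `b (ε_n (a₀, a₁, …, a_n)) = 0`. -/
theorem hochschild_boundary_antisymmetrization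
    (k : Type u) [CommRing k] (A : Type u) [CommRing A] [Algebra k A]
    (r : ℕ) (a₀ : A) (a : Fin (r+1) → A) :
    hboundary k A A r
      (∑ σ : Equiv.Perm (Fin (r+1)),
        ((Equiv.Perm.sign σ : ℤ)) • helem k A A (r+1) a₀ (fun i => a (σ⁻¹ i))) = 0 := by
  classical
  have hstep : ∀ σ : Equiv.Perm (Fin (r+1)),
      hboundary k A A r
          (((Equiv.Perm.sign σ : ℤ)) • helem k A A (r+1) a₀ (fun i => a (σ⁻¹ i)))
        = ∑ j : Fin (r+2), hterm k A r a₀ a (σ, j) := by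
    intro σ
    rw [map_zsmul, hboundary_helem, Finset.smul_sum]
    refine Finset.sum_congr rfl fun j _ => ?_
    rw [smul_smul]
    rfl
  rw [map_sum, Finset.sum_congr rfl (fun σ _ => hstep σ), ← Fintype.sum_prod_type]
  exact Finset.sum_ninvolution (invo r) (hterm_invo k A r a₀ a)
    (fun x _ => invo_ne r x) (fun x => Finset.mem_univ _) (invo_invo r)
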